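/- Let M be an infinite matrix indexed by ℕ with diagonal entries M_{jj} = λ for a fixed λ, and suppose there exists A > 0 with |M_{jl}|² ≤ A/(j² − l²)² for all j ≠ l (j, l ≥ 1). Then the operator T with matrix T_{jl} = M_{jl} for j ≠ l and T_{jj} = 0 is Hilbert–Schmidt on ℓ². -/

import Mathlib

lemma base_summable' : Summable (fun n : ℕ => (1:ℝ)/((n:ℝ)+1)^2) := by
  have h := Real.summable_one_div_nat_pow.mpr (by norm_num : 1 < 2)
  have h2 := (summable_nat_add_iff 1).mpr h
  refine h2.congr fun n => ?_
  push_cast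
  ring

lemma prod_summable' (A : ℝ) :
    Summable (fun p : ℕ × ℕ => A / (((p.1:ℝ)+1)^2 * ((p.2:ℝ)+1)^2)) := by
  have h := (base_summable'.mul_of_nonneg base_summable'
      (fun n => by positivity) (fun n => by positivity))
  refine (h.mul_left A).congr fun p => ?_
  field_simp

lemma half_summable' (A : ℝ) :
    Summable (fun p : ℕ × ℕ => if p.2 < p.1
      then A / (((p.1:ℝ) - (p.2:ℝ))^2 * ((p.2:ℝ)+1)^2) else 0) := by
  set f : ℕ × ℕ → ℕ × ℕ := fun q => (q.2 + q.1 + 1, q.2) with hf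
  have hinj : Function.Injective f := by
    intro a b h
    simp only [hf, Prod.mk.injEq] at h
    obtain ⟨h1, h2⟩ := h
    exact Prod.ext (by omega) h2
  have hvan : ∀ p ∉ Set.range f,
      (if p.2 < p.1 then A / (((p.1:ℝ) - (p.2:ℝ))^2 * ((p.2:ℝ)+1)^2) else 0) = 0 := by
    intro p hp
    rw [if_neg]
    intro hlt
    refine hp ⟨(p.1 - p.2 - 1, p.2), ?_⟩
    simp only [hf]
    exact Prod.ext (by omega) rfl
  rw [← hinj.summable_iff hvan]
  refine (prod_summable' A).congr fun q => ?_
  have : (q.2:ℕ) < q.2 + q.1 + 1 := by omega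
  simp only [Function.comp, hf, if_pos this]
  push_cast
  ring_nf

/-- key denominator comparison: for naturals y < x,
`(x-y)^2 (y+1)^2 ≤ ((x+1)^2-(y+1)^2)^2`. -/
lemma denom_le (x y : ℕ) (h : y < x) :
    ((x:ℝ) - y)^2 * ((y:ℝ)+1)^2 ≤ (((x:ℝ)+1)^2 - ((y:ℝ)+1)^2)^2 := by
  have hx : (0:ℝ) ≤ x := Nat.cast_nonneg x
  have hy : (0:ℝ) ≤ y := Nat.cast_nonneg y
  have key : (((x:ℝ)+1)^2 - ((y:ℝ)+1)^2)^2 = ((x:ℝ)-y)^2 * ((x:ℝ)+y+2)^2 := by ring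
  rw [key]
  refine mul_le_mul_of_nonneg_left ?_ (sq_nonneg _)
  have h1 : (0:ℝ) ≤ (y:ℝ) + 1 := by linarith
  have h2 : (y:ℝ) + 1 ≤ (x:ℝ) + y + 2 := by linarith
  exact pow_le_pow_left₀ h1 h2 2

theorem offdiagonal_hilbertSchmidt (M : ℕ → ℕ → ℝ) (lam : ℝ)
    (hdiag : ∀ j, M j j = lam) (A : ℝ) (hA : 0 < A)
    (hbound : ∀ j l, j ≠ l →
      (M j l) ^ 2 ≤ A / (((j + 1 : ℝ)) ^ 2 - ((l + 1 : ℝ)) ^ 2) ^ 2) :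
    Summable (fun p : ℕ × ℕ =>
      (if p.1 = p.2 then (0 : ℝ) else M p.1 p.2) ^ 2) := by
  have h1 := half_summable' A
  have h2 : Summable (fun p : ℕ × ℕ => if p.1 < p.2
      then A / (((p.2:ℝ) - (p.1:ℝ))^2 * ((p.1:ℝ)+1)^2) else 0) := by
    have hs : Summable (fun p : ℕ × ℕ =>
        (fun q : ℕ × ℕ => if q.2 < q.1
          then A / (((q.1:ℝ) - (q.2:ℝ))^2 * ((q.2:ℝ)+1)^2) else 0)
        (Equiv.prodComm ℕ ℕ p)) :=
      ((Equiv.prodComm ℕ ℕ).summable_iff (f := fun q : ℕ × ℕ => if q.2 < q.1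
          then A / (((q.1:ℝ) - (q.2:ℝ))^2 * ((q.2:ℝ)+1)^2) else 0)).mpr
        (half_summable' A)
    exact hs.congr fun p => by simp [Equiv.prodComm]; rfl
  refine Summable.of_nonneg_of_le (fun p => sq_nonneg _) (fun p => ?_) (h1.add h2)
  by_cases h : p.1 = p.2
  · simp [h, if_neg (lt_irrefl p.2)]
  · rw [if_neg h]
    rcases lt_or_gt_of_ne h with hlt | hgt
    · -- p.1 < p.2
      rw [if_neg (by omega : ¬ p.2 < p.1), if_pos hlt, zero_add]
      refine (hbound p.1 p.2 h).trans ?_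
      have hc : (p.1:ℝ) + 1 ≤ (p.2:ℝ) := by exact_mod_cast hlt
      have hpos : (0:ℝ) < ((p.2:ℝ) - p.1)^2 * ((p.1:ℝ)+1)^2 := by
        have : (0:ℝ) < (p.2:ℝ) - p.1 := by linarith
        have h1' : (0:ℝ) < ((p.2:ℝ) - p.1)^2 := pow_pos this 2
        have h2' : (0:ℝ) < ((p.1:ℝ)+1)^2 := by positivity
        exact mul_pos h1' h2'
      refine div_le_div_of_nonneg_left hA.le hpos ?_
      have := denom_le p.2 p.1 hlt
      calc ((p.2:ℝ) - p.1)^2 * ((p.1:ℝ)+1)^2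
          ≤ (((p.2:ℝ)+1)^2 - ((p.1:ℝ)+1)^2)^2 := this
        _ = (((p.1:ℝ)+1)^2 - ((p.2:ℝ)+1)^2)^2 := by ring
    · -- p.2 < p.1
      rw [if_pos hgt, if_neg (by omega : ¬ p.1 < p.2), add_zero]
      refine (hbound p.1 p.2 h).trans ?_
      have hc : (p.2:ℝ) + 1 ≤ (p.1:ℝ) := by exact_mod_cast hgt
      have hpos : (0:ℝ) < ((p.1:ℝ) - p.2)^2 * ((p.2:ℝ)+1)^2 := by
        have : (0:ℝ) < (p.1:ℝ) - p.2 := by linarith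
        have h1' : (0:ℝ) < ((p.1:ℝ) - p.2)^2 := pow_pos this 2
        have h2' : (0:ℝ) < ((p.2:ℝ)+1)^2 := by positivity
        exact mul_pos h1' h2'
      exact div_le_div_of_nonneg_left hA.le hpos (denom_le p.1 p.2 hgt)
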